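/- Local optimality implies global optimality for ordinally concave maximization over a box: let f be ordinally concave on Ξ⁰, b ∈ ℤ_{≥0}^I, and ξ ∈ Ξ⁰ with ξ ≤ b. If for every coordinate i with ξ + χ_i ≤ b and ξ + χ_i ∈ Ξ⁰ we have f(ξ + χ_i) < f(ξ), and ξ was reached by greedily adding best unit increments from 0 (so each earlier increment weakly increased f relative to alternatives), then ξ maximizes f over {ζ ∈ Ξ⁰ : ζ ≤ b}. In particular, the outcome of the domain-reduction algorithm is a maximizer of f over the box. -/

import Mathlib

/-- `chi j` is the unit vector at `j` for `j = some i`, and the zero vector for `j = none`. -/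
def chi {I : Type*} [DecidableEq I] : Option I → I → ℤ
  | none => fun _ => 0
  | some i => fun k => if k = i then 1 else 0

/-- Unit vector at coordinate `i`. -/
def unitv {I : Type*} [DecidableEq I] (i : I) : I → ℤ := fun k => if k = i then 1 else 0

/-- `f` is ordinally concave on the domain `Ξ`. -/
def OrdinallyConcave {I : Type*} [DecidableEq I] (Ξ : Set (I → ℤ)) (f : (I → ℤ) → ℝ) : Prop :=
  ∀ ξ ∈ Ξ, ∀ ξ' ∈ Ξ, ∀ i : I, ξ' i < ξ i →
    ∃ j : Option I, (∀ k, j = some k → ξ k < ξ' k) ∧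
      ξ - chi (some i) + chi j ∈ Ξ ∧ ξ' + chi (some i) - chi j ∈ Ξ ∧
      (f ξ < f (ξ - chi (some i) + chi j) ∨
        f ξ' < f (ξ' + chi (some i) - chi j) ∨
        (f (ξ' + chi (some i) - chi j) = f ξ' ∧ f (ξ - chi (some i) + chi j) = f ξ))

/-- The states reachable by the domain-reduction algorithm for maximizing `f` over the
box `{ζ ∈ Ξ : ζ ≤ b}`: starting from `0`, repeatedly add a best unit increment as long
as this weakly increases `f`. -/
inductive Reach {I : Type*} [DecidableEq I] (Ξ : Set (I → ℤ)) (f : (I → ℤ) → ℝ)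
    (b : I → ℤ) : (I → ℤ) → Prop
  | zero : Reach Ξ f b 0
  | step (ξ : I → ℤ) (i : I) :
      Reach Ξ f b ξ →
      ξ + unitv i ∈ Ξ → ξ + unitv i ≤ b →
      f ξ ≤ f (ξ + unitv i) →
      (∀ i' : I, ξ + unitv i' ∈ Ξ → ξ + unitv i' ≤ b → f (ξ + unitv i') ≤ f (ξ + unitv i)) →
      Reach Ξ f b (ξ + unitv i)


lemma chi_none_eq {I : Type*} [DecidableEq I] : (chi none : I → ℤ) = 0 := rfl

lemma chi_some_eq {I : Type*} [DecidableEq I] (i : I) : (chi (some i) : I → ℤ) = unitv i := rfl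

lemma unitv_apply {I : Type*} [DecidableEq I] (i k : I) :
    unitv i k = if k = i then 1 else 0 := rfl

lemma reach_mem {I : Type*} [DecidableEq I] {Ξ : Set (I → ℤ)} {f : (I → ℤ) → ℝ}
    {b : I → ℤ} (h0 : (0 : I → ℤ) ∈ Ξ) {ξ : I → ℤ} (h : Reach Ξ f b ξ) : ξ ∈ Ξ := by
  induction h with
  | zero => exact h0
  | step ξ i _ hm _ _ _ _ => exact hm

/-- Invariant of the domain-reduction algorithm: every reachable point is dominated by
some global maximizer of `f` over the box. -/
lemma reach_le_max {I : Type*} [Fintype I] [DecidableEq I]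
    (Ξ : Set (I → ℤ)) (hfin : Ξ.Finite) (h0 : (0 : I → ℤ) ∈ Ξ)
    (hpos : ∀ ξ ∈ Ξ, ∀ i, 0 ≤ ξ i)
    (f : (I → ℤ) → ℝ) (hf : OrdinallyConcave Ξ f)
    (b : I → ℤ) (hb : ∀ i, 0 ≤ b i)
    (ξ : I → ℤ) (hreach : Reach Ξ f b ξ) :
    ∃ m, m ∈ Ξ ∧ m ≤ b ∧ (∀ ζ ∈ Ξ, ζ ≤ b → f ζ ≤ f m) ∧ ξ ≤ m := by
  induction hreach with
  | zero =>
    have hSfin : ({ζ ∈ Ξ | ζ ≤ b}).Finite := hfin.subset (fun x hx => hx.1)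
    have hne : ({ζ ∈ Ξ | ζ ≤ b}).Nonempty := ⟨0, h0, fun i => hb i⟩
    obtain ⟨m, hm, hmax⟩ := hSfin.exists_maximalFor f _ hne
    refine ⟨m, hm.1, hm.2, ?_, fun i => hpos m hm.1 i⟩
    intro ζ hζ hζb
    by_contra hlt
    push_neg at hlt
    exact absurd (hmax ⟨hζ, hζb⟩ hlt.le) (not_le.2 hlt)
  | step ξ i hr hmemi hlei hmono hbest ih =>
    obtain ⟨m, hmΞ, hmb, hmax, hξm⟩ := ih
    -- scalar facts
    have hbi : ξ i + 1 ≤ b i := by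
      have : ξ i + unitv i i ≤ b i := hlei i
      simp [unitv_apply] at this
      omega
    have hξb : ∀ k, ξ k ≤ b k := by
      intro k
      have : ξ k + unitv i k ≤ b k := hlei k
      by_cases hk : k = i
      · subst hk; simp [unitv_apply] at this; omega
      · simp [unitv_apply, hk] at this; omega
    by_cases hcase : ξ i < m i
    · refine ⟨m, hmΞ, hmb, hmax, ?_⟩
      intro k
      have h1 : ξ k ≤ m k := hξm k
      by_cases hk : k = i
      · subst hk; simp [unitv_apply]; omega
      · simp [unitv_apply, hk]; omega
    · have heq : m i = ξ i := le_antisymm (not_lt.1 hcase) (hξm i)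
      have hlt : m i < (ξ + unitv i) i := by
        simp [unitv_apply]
        omega
      obtain ⟨j, hj, hα, hβ, hor⟩ := hf (ξ + unitv i) hmemi m hmΞ i hlt
      have harith : ξ + unitv i - chi (some i) + chi j = ξ + chi j := by
        rw [chi_some_eq, add_sub_cancel_right]
      rw [harith] at hα hor
      cases j with
      | none =>
        simp only [chi_none_eq, chi_some_eq, add_zero, sub_zero] at hα hβ hor
        -- β = m + unitv i
        have hβb : m + unitv i ≤ b := by
          intro k
          have h2 : m k ≤ b k := hmb k
          by_cases hk : k = i
          · subst hk; simp [unitv_apply]; omega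
          · simp [unitv_apply, hk]; omega
        rcases hor with h1 | h2 | h3
        · exact absurd hmono (not_le.2 h1)
        · exact absurd (hmax _ hβ hβb) (not_le.2 h2)
        · refine ⟨m + unitv i, hβ, hβb, ?_, ?_⟩
          · intro ζ hζ hζb
            rw [h3.1]
            exact hmax ζ hζ hζb
          · intro k
            have h4 : ξ k ≤ m k := hξm k
            by_cases hk : k = i
            · subst hk; simp [unitv_apply]; omega
            · simp [unitv_apply, hk]; omega
      | some k =>
        have hjk' : (ξ + unitv i) k < m k := hj k rfl
        have hki : k ≠ i := by
          intro hki
          subst hki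
          simp [unitv_apply] at hjk'
          omega
        have hik : ¬ (i = k) := fun h => hki h.symm
        have hjk : ξ k + 1 ≤ m k := by
          simp [unitv_apply, hki] at hjk'
          omega
        simp only [chi_some_eq] at hα hβ hor
        -- α = ξ + unitv k, β = m + unitv i - unitv k
        have hαb : ξ + unitv k ≤ b := by
          intro k'
          have h2 : m k' ≤ b k' := hmb k'
          have h3 := hξb k'
          by_cases hk' : k' = k
          · subst hk'; simp [unitv_apply]; omega
          · simp [unitv_apply, hk']; omega
        have hβb : m + unitv i - unitv k ≤ b := by
          intro k'
          have h2 : m k' ≤ b k' := hmb k'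
          by_cases h1 : k' = i
          · subst h1; simp [unitv_apply, hik]; omega
          · by_cases h4 : k' = k
            · subst h4; simp [unitv_apply, h1]; omega
            · simp [unitv_apply, h1, h4]; omega
        rcases hor with h1 | h2 | h3
        · exact absurd (hbest k hα hαb) (not_le.2 h1)
        · exact absurd (hmax _ hβ hβb) (not_le.2 h2)
        · refine ⟨m + unitv i - unitv k, hβ, hβb, ?_, ?_⟩
          · intro ζ hζ hζb
            rw [h3.1]
            exact hmax ζ hζ hζb
          · intro k'
            have h4 : ξ k' ≤ m k' := hξm k'
            by_cases h1 : k' = i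
            · subst h1; simp [unitv_apply, hik]; omega
            · by_cases h5 : k' = k
              · subst h5; simp [unitv_apply, h1]; omega
              · simp [unitv_apply, h1, h5]; omega

/-- if `ξ` is reached by the domain-reduction algorithm and no further
unit increment weakly increases `f`, then `ξ` maximizes `f` over the box
`{ζ ∈ Ξ : ζ ≤ b}`; in particular, the outcome of the domain-reduction algorithm is a
maximizer of `f` over the box. -/
theorem domain_reduction_global_max {I : Type*} [Fintype I] [DecidableEq I]
    (Ξ : Set (I → ℤ)) (hfin : Ξ.Finite) (h0 : (0 : I → ℤ) ∈ Ξ)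
    (hpos : ∀ ξ ∈ Ξ, ∀ i, 0 ≤ ξ i)
    (f : (I → ℤ) → ℝ) (hfnn : ∀ ξ ∈ Ξ, 0 ≤ f ξ) (hf : OrdinallyConcave Ξ f)
    (b : I → ℤ) (hb : ∀ i, 0 ≤ b i)
    (ξ : I → ℤ) (hreach : Reach Ξ f b ξ)
    (hterm : ∀ i : I, ξ + unitv i ∈ Ξ → ξ + unitv i ≤ b → f (ξ + unitv i) < f ξ) :
    ∀ ζ ∈ Ξ, ζ ≤ b → f ζ ≤ f ξ := by
  obtain ⟨m, hmΞ, hmb, hmax, hξm⟩ := reach_le_max Ξ hfin h0 hpos f hf b hb ξ hreach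
  have hξΞ : ξ ∈ Ξ := reach_mem h0 hreach
  suffices hfm : f m ≤ f ξ by
    intro ζ hζ hζb
    exact le_trans (hmax ζ hζ hζb) hfm
  by_cases hme : m = ξ
  · rw [hme]
  · have : ∃ i, ξ i < m i := by
      by_contra h'
      push_neg at h'
      exact hme (funext fun i => le_antisymm (h' i) (hξm i))
    obtain ⟨i, hi⟩ := this
    obtain ⟨j, hj, hα, hβ, hor⟩ := hf m hmΞ ξ hξΞ i hi
    have hjnone : j = none := by
      cases j with
      | none => rfl
      | some k => exact absurd (hj k rfl) (not_lt.2 (hξm k))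
    subst hjnone
    simp only [chi_none_eq, chi_some_eq, add_zero, sub_zero] at hα hβ hor
    have hαb : m - unitv i ≤ b := by
      intro k'
      have h2 : m k' ≤ b k' := hmb k'
      by_cases h1 : k' = i
      · subst h1; simp [unitv_apply]; omega
      · simp [unitv_apply, h1]; omega
    have hβb : ξ + unitv i ≤ b := by
      intro k'
      have h2 : m k' ≤ b k' := hmb k'
      have h3 : ξ k' ≤ m k' := hξm k'
      by_cases h1 : k' = i
      · subst h1; simp [unitv_apply]; omega
      · simp [unitv_apply, h1]; omega
    rcases hor with h1 | h2 | h3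
    · exact absurd (hmax _ hα hαb) (not_le.2 h1)
    · exact absurd (hterm i hβ hβb) (not_lt.2 h2.le)
    · exact absurd (hterm i hβ hβb) (by rw [h3.1]; exact lt_irrefl _)
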